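/- Suppose among k reals ṽ_1,…,ṽ_k, at most q₁ ≤ b < k/2 are arbitrary and the rest are correct values v_1,…,v_{k−q₁} with mean v̄. Then (Trmean_b({ṽ_i}) − v̄)² ≤ (2(k−q₁)(k+b−q₁)/(k−b−q₁)²) · (1/(k−q₁))∑_{i∈[k−q₁]}(v_i − v̄)², where Trmean_b is the b-trimmed mean (1/(k−2b))∑_{i=b+1}^{k−b} ṽ_{i:k}. -/

import Mathlib

open Finset

/-- The `i`-th smallest element (0-indexed) of the tuple `v`. -/
noncomputable def ordStat {k : ℕ} (v : Fin k → ℝ) (i : Fin k) : ℝ :=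
  v (Tuple.sort v i)

/-- The `b`-trimmed mean of `k` reals. -/
noncomputable def trmean {k : ℕ} (b : ℕ) (v : Fin k → ℝ) : ℝ :=
  (∑ i : Fin k, if b ≤ (i : ℕ) ∧ (i : ℕ) < k - b then ordStat v i else 0) /
    ((k : ℝ) - 2 * b)

lemma cross_sum (S T : Finset ℕ) (f : ℕ → ℝ)
    (h : ∀ s ∈ S, ∀ t ∈ T, f s ≤ f t) :
    (T.card : ℝ) * ∑ s ∈ S, f s ≤ (S.card : ℝ) * ∑ t ∈ T, f t := by
  have h1 : ∑ s ∈ S, ∑ _t ∈ T, f s = (T.card : ℝ) * ∑ s ∈ S, f s := by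
    rw [Finset.mul_sum]
    exact Finset.sum_congr rfl fun s _ => by rw [Finset.sum_const, nsmul_eq_mul]
  have h2 : ∑ _s ∈ S, ∑ t ∈ T, f t = (S.card : ℝ) * ∑ t ∈ T, f t := by
    rw [Finset.sum_const, nsmul_eq_mul]
  rw [← h1, ← h2]
  exact Finset.sum_le_sum fun s hs => Finset.sum_le_sum fun t ht => h s hs t ht

lemma ordStat_le_of_card {k : ℕ} (f : Fin k → ℝ) (i : Fin k) (t : ℝ)
    (h : (i : ℕ) + 1 ≤ (Finset.univ.filter fun j => f j ≤ t).card) :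
    ordStat f i ≤ t := by
  by_contra hlt
  push_neg at hlt
  have hmono := Tuple.monotone_sort f
  have hmap : ∀ j ∈ Finset.univ.filter fun j => f j ≤ t,
      (Tuple.sort f).symm j ∈ Finset.Iio i := by
    intro j hj
    simp only [Finset.mem_filter, Finset.mem_univ, true_and] at hj
    rw [Finset.mem_Iio]
    by_contra hge
    push_neg at hge
    have h2 : (f ∘ Tuple.sort f) i ≤ (f ∘ Tuple.sort f) ((Tuple.sort f).symm j) := hmono hge
    simp only [Function.comp_apply, Equiv.apply_symm_apply] at h2
    exact absurd (h2.trans hj) (not_le.mpr hlt)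
  have hcard := Finset.card_le_card_of_injOn _ hmap
      (fun a _ b _ hab => (Tuple.sort f).symm.injective hab)
  rw [Fin.card_Iio] at hcard
  omega

lemma le_ordStat_of_card {k : ℕ} (f : Fin k → ℝ) (i : Fin k) (t : ℝ)
    (h : k - (i : ℕ) ≤ (Finset.univ.filter fun j => t ≤ f j).card) :
    t ≤ ordStat f i := by
  by_contra hlt
  push_neg at hlt
  have hmono := Tuple.monotone_sort f
  have hmap : ∀ j ∈ Finset.univ.filter fun j => t ≤ f j,
      (Tuple.sort f).symm j ∈ Finset.Ioi i := by
    intro j hj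
    simp only [Finset.mem_filter, Finset.mem_univ, true_and] at hj
    rw [Finset.mem_Ioi]
    by_contra hge
    push_neg at hge
    have h2 : (f ∘ Tuple.sort f) ((Tuple.sort f).symm j) ≤ (f ∘ Tuple.sort f) i := hmono hge
    simp only [Function.comp_apply, Equiv.apply_symm_apply] at h2
    exact absurd (hj.trans h2) (not_le.mpr hlt)
  have hcard := Finset.card_le_card_of_injOn _ hmap
      (fun a _ b _ hab => (Tuple.sort f).symm.injective hab)
  rw [Fin.card_Ioi] at hcard
  have := i.isLt
  omega

lemma rhs_rearrange (N M S c : ℝ) (h1 : 0 < N) (h2 : 0 < M) :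
    2 * N * (N + c) / M ^ 2 * (1 / N * S) = 2 * (N + c) * S / M ^ 2 := by
  have hne1 : N ≠ 0 := ne_of_gt h1
  have hne2 : M ≠ 0 := ne_of_gt h2
  field_simp

lemma sq_le_of_between (a t s : ℝ) (h1 : a ≤ t) (h2 : -s ≤ a) : a ^ 2 ≤ t ^ 2 + s ^ 2 := by
  rcases le_or_gt 0 a with h | h
  · nlinarith
  · nlinarith

set_option maxHeartbeats 1000000 in
/-- robustness of the trimmed mean: the squared distance between the
`b`-trimmed mean of the (partially poisoned) sequence and the mean of the correct
values is bounded by the empirical variance of the correct values scaled by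
`2(k-q₁)(k+b-q₁)/(k-b-q₁)²`. -/
theorem trimmed_mean_robustness
    (k q₁ b : ℕ) (hq₁b : q₁ ≤ b) (hbk : 2 * b < k)
    (vt : Fin k → ℝ)                 -- the full (possibly poisoned) sequence
    (v : Fin (k - q₁) → ℝ)           -- the correct values
    (ι : Fin (k - q₁) → Fin k)       -- where the correct values sit
    (hι : Function.Injective ι)
    (hcorrect : ∀ j, vt (ι j) = v j)
    (vbar : ℝ) (hvbar : vbar = (1 / ((k : ℝ) - q₁)) * ∑ i, v i) :
    (trmean b vt - vbar) ^ 2 ≤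
      (2 * ((k : ℝ) - q₁) * ((k : ℝ) + b - q₁) / ((k : ℝ) - b - q₁) ^ 2) *
        ((1 / ((k : ℝ) - q₁)) * ∑ i, (v i - vbar) ^ 2) := by
  have hqk : q₁ ≤ k := by omega
  have hbn : b < (k - q₁) := by omega
  have hnpos : 0 < (k - q₁) := by omega
  have hc1pos : 0 < (k - 2 * b) := by omega
  have hmpos : 0 < (k - q₁ - b) := by omega
  -- monotone sorted tuples
  have hwmono : Monotone (ordStat v) := Tuple.monotone_sort v
  -- the injection of the correct values, presorted
  set ψ : Fin (k - q₁) → Fin k := fun p => ι (Tuple.sort v p) with hψdef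
  have hψinj : Function.Injective ψ := fun a b hab => (Tuple.sort v).injective (hι hab)
  have hψval : ∀ p, vt (ψ p) = ordStat v p := fun p => hcorrect (Tuple.sort v p)
  -- padded sequences
  set U : ℕ → ℝ := fun j => if h : j < k then ordStat vt ⟨j, h⟩ else 0 with hU
  set W : ℕ → ℝ := fun j => if h : j < (k - q₁) then ordStat v ⟨j, h⟩ else 0 with hW
  set D : ℕ → ℝ := fun j => W j - vbar with hD
  -- sandwich bounds for the kept entries
  have hsandA : ∀ j ∈ Finset.Ico b (k - b), U j ≤ W j := by
    intro j hj
    rw [Finset.mem_Ico] at hj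
    have hjk : j < k := by omega
    have hjn : j < (k - q₁) := by omega
    simp only [hU, hW, dif_pos hjk, dif_pos hjn]
    apply ordStat_le_of_card
    have hsub : (Finset.Iic (⟨j, hjn⟩ : Fin (k - q₁))).card ≤
        (Finset.univ.filter fun p => vt p ≤ ordStat v ⟨j, hjn⟩).card := by
      apply Finset.card_le_card_of_injOn ψ
      · intro p hp
        rw [Finset.mem_coe, Finset.mem_Iic] at hp
        simp only [Finset.mem_coe, Finset.mem_filter, Finset.mem_univ, true_and]
        rw [hψval p]
        exact hwmono hp
      · exact fun a _ b _ hab => hψinj hab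
    rw [Fin.card_Iic] at hsub
    exact hsub
  have hsandB : ∀ j ∈ Finset.Ico b (k - b), W (j - q₁) ≤ U j := by
    intro j hj
    rw [Finset.mem_Ico] at hj
    have hjk : j < k := by omega
    have hjq : j - q₁ < (k - q₁) := by omega
    simp only [hU, hW, dif_pos hjk, dif_pos hjq]
    apply le_ordStat_of_card
    have hsub : (Finset.Ici (⟨j - q₁, hjq⟩ : Fin (k - q₁))).card ≤
        (Finset.univ.filter fun p => ordStat v ⟨j - q₁, hjq⟩ ≤ vt p).card := by
      apply Finset.card_le_card_of_injOn ψ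
      · intro p hp
        rw [Finset.mem_coe, Finset.mem_Ici] at hp
        simp only [Finset.mem_coe, Finset.mem_filter, Finset.mem_univ, true_and]
        rw [hψval p]
        exact hwmono hp
      · exact fun a _ b _ hab => hψinj hab
    rw [Fin.card_Ici] at hsub
    have hsub' : (k - q₁) - (j - q₁) ≤
        (Finset.univ.filter fun p => ordStat v ⟨j - q₁, hjq⟩ ≤ vt p).card := hsub
    show k - j ≤ _
    omega
  -- sums of the correct values
  have hnr : (k : ℝ) - q₁ = ((k - q₁ : ℕ) : ℝ) := by
    rw [Nat.cast_sub hqk]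
  have hsumW : ∑ j ∈ Finset.range (k - q₁), W j = ∑ i, v i := by
    rw [← Fin.sum_univ_eq_sum_range W (k - q₁)]
    rw [show ∑ i : Fin (k - q₁), W ↑i = ∑ i : Fin (k - q₁), v (Tuple.sort v i) from
      Finset.sum_congr rfl fun i _ => by simp [hW, i.isLt, ordStat]]
    exact Equiv.sum_comp (Tuple.sort v) v
  have hsumv' : ∑ i, v i = ((k - q₁ : ℕ) : ℝ) * vbar := by
    have hne : ((k - q₁ : ℕ) : ℝ) ≠ 0 := by positivity
    rw [hvbar, hnr, one_div, ← mul_assoc, mul_inv_cancel₀ hne, one_mul]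
  have hDzero : ∑ j ∈ Finset.range (k - q₁), D j = 0 := by
    simp only [hD, Finset.sum_sub_distrib, hsumW, hsumv', Finset.sum_const,
      Finset.card_range, nsmul_eq_mul]
    ring
  set SQ := ∑ j ∈ Finset.range (k - q₁), D j ^ 2 with hSQdef
  have hSQ : SQ = ∑ i, (v i - vbar) ^ 2 := by
    rw [hSQdef, ← Fin.sum_univ_eq_sum_range (fun j => D j ^ 2) (k - q₁)]
    rw [show ∑ i : Fin (k - q₁), D ↑i ^ 2 = ∑ i : Fin (k - q₁), (v (Tuple.sort v i) - vbar) ^ 2 from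
      Finset.sum_congr rfl fun i _ => by simp [hD, hW, i.isLt, ordStat]]
    exact Equiv.sum_comp (Tuple.sort v) (fun x => (v x - vbar) ^ 2)
  have hSQnn : (0 : ℝ) ≤ SQ := Finset.sum_nonneg fun _ _ => sq_nonneg _
  -- expressing the trimmed mean
  have hnum : (∑ i : Fin k, if b ≤ (i : ℕ) ∧ (i : ℕ) < k - b then ordStat vt i else 0)
      = ∑ j ∈ Finset.Ico b (k - b), U j := by
    have e1 : ∀ i : Fin k, (if b ≤ (i : ℕ) ∧ (i : ℕ) < k - b then ordStat vt i else 0)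
        = (fun j : ℕ => if b ≤ j ∧ j < k - b then U j else 0) ↑i := by
      intro i
      by_cases hc : b ≤ (i : ℕ) ∧ (i : ℕ) < k - b
      · simp [hc, hU, i.isLt]
      · simp [hc]
    rw [Finset.sum_congr rfl (fun i _ => e1 i),
      Fin.sum_univ_eq_sum_range (fun j => if b ≤ j ∧ j < k - b then U j else 0) k,
      ← Finset.sum_filter]
    congr 1
    ext j
    simp only [Finset.mem_filter, Finset.mem_range, Finset.mem_Ico]
    omega
  set X := ∑ j ∈ Finset.Ico b (k - b), (U j - vbar) with hXdef
  have hcard1 : (Finset.Ico b (k - b)).card = (k - 2 * b) := by rw [Nat.card_Ico]; omega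
  have hc1r : (k : ℝ) - 2 * b = ((k - 2 * b : ℕ) : ℝ) := by
    rw [Nat.cast_sub (by omega : 2 * b ≤ k)]
    push_cast
    ring
  have hc1rpos : (0 : ℝ) < ((k - 2 * b : ℕ) : ℝ) := by exact_mod_cast hc1pos
  have hmrpos : (0 : ℝ) < ((k - q₁ - b : ℕ) : ℝ) := by exact_mod_cast hmpos
  have hnrpos : (0 : ℝ) < ((k - q₁ : ℕ) : ℝ) := by exact_mod_cast hnpos
  have htm : trmean b vt - vbar = X / ((k - 2 * b : ℕ) : ℝ) := by
    rw [trmean, hnum, hc1r, hXdef]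
    rw [Finset.sum_sub_distrib, Finset.sum_const, hcard1, nsmul_eq_mul]
    field_simp
  -- monotonicity of D within range (k - q₁)
  have hDmono : ∀ s t : ℕ, s ≤ t → t < (k - q₁) → D s ≤ D t := by
    intro s t hst htn
    have hsn : s < (k - q₁) := lt_of_le_of_lt hst htn
    simp only [hD, hW, dif_pos hsn, dif_pos htn]
    exact sub_le_sub_right (hwmono (show (⟨s, hsn⟩ : Fin (k - q₁)) ≤ ⟨t, htn⟩ from hst)) _
  have hmsplit : ((k - q₁ - b : ℕ) : ℝ) = ((k - 2 * b : ℕ) : ℝ) + ((b - q₁ : ℕ) : ℝ) := by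
    rw [show k - q₁ - b = (k - 2 * b) + (b - q₁) from by omega]
    push_cast; ring
  -- F1 : upper bound
  have hXle : X ≤ ∑ j ∈ Finset.Ico b (k - b), D j := by
    rw [hXdef]
    exact Finset.sum_le_sum fun j hj => sub_le_sub_right (hsandA j hj) vbar
  have hcross1 : ((b - q₁ : ℕ) : ℝ) * ∑ s ∈ Finset.Ico b (k - b), D s
      ≤ ((k - 2 * b : ℕ) : ℝ) * ∑ t ∈ Finset.Ico (k - b) (k - q₁), D t := by
    have := cross_sum (Finset.Ico b (k - b)) (Finset.Ico (k - b) (k - q₁)) D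
      (fun s hs t ht => by
        rw [Finset.mem_Ico] at hs ht
        exact hDmono s t (by omega) (by omega))
    rwa [Nat.card_Ico, Nat.card_Ico, show (k - q₁) - (k - b) = (b - q₁) from by omega,
      show (k - b) - b = (k - 2 * b) from by omega] at this
  have hIco1 : ∑ s ∈ Finset.Ico b (k - b), D s + ∑ t ∈ Finset.Ico (k - b) (k - q₁), D t
      = ∑ j ∈ Finset.Ico b (k - q₁), D j :=
    Finset.sum_Ico_consecutive D (by omega) (by omega)
  have hIco2 : ∑ j ∈ Finset.Ico b (k - q₁), D j = - ∑ j ∈ Finset.range b, D j := by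
    have := Finset.sum_range_add_sum_Ico D (by omega : b ≤ (k - q₁))
    rw [hDzero] at this
    linarith
  have hF1 : ((k - q₁ - b : ℕ) : ℝ) * X ≤ ((k - 2 * b : ℕ) : ℝ) * (- ∑ j ∈ Finset.range b, D j) := by
    calc ((k - q₁ - b : ℕ) : ℝ) * X ≤ ((k - q₁ - b : ℕ) : ℝ) * ∑ s ∈ Finset.Ico b (k - b), D s :=
          mul_le_mul_of_nonneg_left hXle (le_of_lt hmrpos)
      _ = ((k - 2 * b : ℕ) : ℝ) * ∑ s ∈ Finset.Ico b (k - b), D s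
          + ((b - q₁ : ℕ) : ℝ) * ∑ s ∈ Finset.Ico b (k - b), D s := by rw [hmsplit]; ring
      _ ≤ ((k - 2 * b : ℕ) : ℝ) * ∑ s ∈ Finset.Ico b (k - b), D s
          + ((k - 2 * b : ℕ) : ℝ) * ∑ t ∈ Finset.Ico (k - b) (k - q₁), D t := by linarith
      _ = ((k - 2 * b : ℕ) : ℝ) * (∑ s ∈ Finset.Ico b (k - b), D s + ∑ t ∈ Finset.Ico (k - b) (k - q₁), D t) := by
          ring
      _ = ((k - 2 * b : ℕ) : ℝ) * (- ∑ j ∈ Finset.range b, D j) := by rw [hIco1, hIco2]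
  -- F2 : lower bound
  have hXge : ∑ j ∈ Finset.Ico (b - q₁) (k - q₁ - b), D j ≤ X := by
    have hre1 : ∑ j ∈ Finset.Ico b (k - b), (W (j - q₁) - vbar) = ∑ j ∈ Finset.Ico (b - q₁) (k - q₁ - b), D j := by
      rw [Finset.sum_Ico_eq_sum_range, Finset.sum_Ico_eq_sum_range,
        show (k - b) - b = (k - q₁ - b) - (b - q₁) from by omega]
      exact Finset.sum_congr rfl fun i _ => by
        simp only [hD]
        rw [show b + i - q₁ = (b - q₁) + i from by omega]
    rw [← hre1, hXdef]
    exact Finset.sum_le_sum fun j hj => sub_le_sub_right (hsandB j hj) vbar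
  have hcross2 : ((k - 2 * b : ℕ) : ℝ) * ∑ s ∈ Finset.range (b - q₁), D s
      ≤ ((b - q₁ : ℕ) : ℝ) * ∑ t ∈ Finset.Ico (b - q₁) (k - q₁ - b), D t := by
    have := cross_sum (Finset.range (b - q₁)) (Finset.Ico (b - q₁) (k - q₁ - b)) D
      (fun s hs t ht => by
        rw [Finset.mem_range] at hs
        rw [Finset.mem_Ico] at ht
        exact hDmono s t (by omega) (by omega))
    rwa [Nat.card_Ico, Finset.card_range, show (k - q₁ - b) - (b - q₁) = (k - 2 * b) from by omega] at this
  have hIco3 : ∑ j ∈ Finset.range (b - q₁), D j + ∑ j ∈ Finset.Ico (b - q₁) (k - q₁ - b), D j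
      = ∑ j ∈ Finset.range (k - q₁ - b), D j :=
    Finset.sum_range_add_sum_Ico D (by omega : (b - q₁) ≤ (k - q₁ - b))
  have hIco4 : ∑ j ∈ Finset.range (k - q₁ - b), D j = - ∑ j ∈ Finset.Ico (k - q₁ - b) (k - q₁), D j := by
    have := Finset.sum_range_add_sum_Ico D (by omega : (k - q₁ - b) ≤ (k - q₁))
    rw [hDzero] at this
    linarith
  have hF2 : ((k - 2 * b : ℕ) : ℝ) * (- ∑ j ∈ Finset.Ico (k - q₁ - b) (k - q₁), D j) ≤ ((k - q₁ - b : ℕ) : ℝ) * X := by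
    calc ((k - 2 * b : ℕ) : ℝ) * (- ∑ j ∈ Finset.Ico (k - q₁ - b) (k - q₁), D j)
        = ((k - 2 * b : ℕ) : ℝ) * ∑ j ∈ Finset.range (k - q₁ - b), D j := by rw [hIco4]
      _ = ((k - 2 * b : ℕ) : ℝ) * ∑ j ∈ Finset.range (b - q₁), D j + ((k - 2 * b : ℕ) : ℝ) * ∑ j ∈ Finset.Ico (b - q₁) (k - q₁ - b), D j := by
          rw [← hIco3]; ring
      _ ≤ ((b - q₁ : ℕ) : ℝ) * ∑ j ∈ Finset.Ico (b - q₁) (k - q₁ - b), D j + ((k - 2 * b : ℕ) : ℝ) * ∑ j ∈ Finset.Ico (b - q₁) (k - q₁ - b), D j := by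
          linarith
      _ = ((k - q₁ - b : ℕ) : ℝ) * ∑ j ∈ Finset.Ico (b - q₁) (k - q₁ - b), D j := by rw [hmsplit]; ring
      _ ≤ ((k - q₁ - b : ℕ) : ℝ) * X := mul_le_mul_of_nonneg_left hXge (le_of_lt hmrpos)
  -- Cauchy-Schwarz on both tails
  have hCS1 : (∑ j ∈ Finset.range b, D j) ^ 2 ≤ (b : ℝ) * SQ := by
    have h1 := Finset.sum_mul_sq_le_sq_mul_sq (Finset.range b) D (fun _ => 1)
    simp only [mul_one, one_pow, Finset.sum_const, Finset.card_range, nsmul_eq_mul] at h1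
    have h2 : ∑ j ∈ Finset.range b, D j ^ 2 ≤ SQ :=
      Finset.sum_le_sum_of_subset_of_nonneg (Finset.range_subset_range.mpr (by omega))
        (fun _ _ _ => sq_nonneg _)
    calc (∑ j ∈ Finset.range b, D j) ^ 2 ≤ (∑ j ∈ Finset.range b, D j ^ 2) * (b : ℝ) := h1
      _ ≤ SQ * (b : ℝ) := mul_le_mul_of_nonneg_right h2 (Nat.cast_nonneg b)
      _ = (b : ℝ) * SQ := mul_comm _ _
  have hCS2 : (∑ j ∈ Finset.Ico (k - q₁ - b) (k - q₁), D j) ^ 2 ≤ (b : ℝ) * SQ := by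
    have h1 := Finset.sum_mul_sq_le_sq_mul_sq (Finset.Ico (k - q₁ - b) (k - q₁)) D (fun _ => 1)
    simp only [mul_one, one_pow, Finset.sum_const, nsmul_eq_mul, Nat.card_Ico] at h1
    rw [show (k - q₁) - (k - q₁ - b) = b from by omega] at h1
    have h2 : ∑ j ∈ Finset.Ico (k - q₁ - b) (k - q₁), D j ^ 2 ≤ SQ := by
      apply Finset.sum_le_sum_of_subset_of_nonneg
      · intro x hx
        rw [Finset.mem_Ico] at hx
        exact Finset.mem_range.mpr hx.2
      · exact fun _ _ _ => sq_nonneg _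
    calc (∑ j ∈ Finset.Ico (k - q₁ - b) (k - q₁), D j) ^ 2
        ≤ (∑ j ∈ Finset.Ico (k - q₁ - b) (k - q₁), D j ^ 2) * (b : ℝ) := h1
      _ ≤ SQ * (b : ℝ) := mul_le_mul_of_nonneg_right h2 (Nat.cast_nonneg b)
      _ = (b : ℝ) * SQ := mul_comm _ _
  -- combine
  have hkey : ((k - q₁ - b : ℕ) : ℝ) ^ 2 * X ^ 2 ≤ ((k - 2 * b : ℕ) : ℝ) ^ 2 * (2 * b * SQ) := by
    have hbtw := sq_le_of_between (((k - q₁ - b : ℕ) : ℝ) * X)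
      (((k - 2 * b : ℕ) : ℝ) * (- ∑ j ∈ Finset.range b, D j))
      (((k - 2 * b : ℕ) : ℝ) * (∑ j ∈ Finset.Ico (k - q₁ - b) (k - q₁), D j)) hF1 (by linarith)
    have e0 : (((k - q₁ - b : ℕ) : ℝ) * X) ^ 2 = ((k - q₁ - b : ℕ) : ℝ) ^ 2 * X ^ 2 := by ring
    have e1 : (((k - 2 * b : ℕ) : ℝ) * (- ∑ j ∈ Finset.range b, D j)) ^ 2
        = ((k - 2 * b : ℕ) : ℝ) ^ 2 * (∑ j ∈ Finset.range b, D j) ^ 2 := by ring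
    have e2 : (((k - 2 * b : ℕ) : ℝ) * (∑ j ∈ Finset.Ico (k - q₁ - b) (k - q₁), D j)) ^ 2
        = ((k - 2 * b : ℕ) : ℝ) ^ 2 * (∑ j ∈ Finset.Ico (k - q₁ - b) (k - q₁), D j) ^ 2 := by ring
    have e3 := mul_le_mul_of_nonneg_left hCS1 (sq_nonneg (((k - 2 * b : ℕ) : ℝ)))
    have e4 := mul_le_mul_of_nonneg_left hCS2 (sq_nonneg (((k - 2 * b : ℕ) : ℝ)))
    rw [e0, e1, e2] at hbtw
    calc ((k - q₁ - b : ℕ) : ℝ) ^ 2 * X ^ 2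
        ≤ ((k - 2 * b : ℕ) : ℝ) ^ 2 * (∑ j ∈ Finset.range b, D j) ^ 2
          + ((k - 2 * b : ℕ) : ℝ) ^ 2 * (∑ j ∈ Finset.Ico (k - q₁ - b) (k - q₁), D j) ^ 2 := hbtw
      _ ≤ ((k - 2 * b : ℕ) : ℝ) ^ 2 * ((b : ℝ) * SQ) + ((k - 2 * b : ℕ) : ℝ) ^ 2 * ((b : ℝ) * SQ) := by
          exact add_le_add e3 e4
      _ = ((k - 2 * b : ℕ) : ℝ) ^ 2 * (2 * b * SQ) := by ring
  -- finish
  rw [htm, ← hSQ, hnr,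
    show (k : ℝ) - b - q₁ = ((k - q₁ - b : ℕ) : ℝ) from by
      rw [Nat.cast_sub (by omega : b ≤ k - q₁), Nat.cast_sub hqk]; ring,
    show (k : ℝ) + b - q₁ = ((k - q₁ : ℕ) : ℝ) + b from by rw [Nat.cast_sub hqk]; ring]
  have hRHS := rhs_rearrange ((k - q₁ : ℕ) : ℝ) ((k - q₁ - b : ℕ) : ℝ) SQ (b : ℝ) hnrpos hmrpos
  rw [hRHS, div_pow, div_le_div_iff₀ (pow_pos hc1rpos 2) (pow_pos hmrpos 2)]
  have h5 : 2 * (b : ℝ) * SQ ≤ 2 * (((k - q₁ : ℕ) : ℝ) + b) * SQ :=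
    mul_le_mul_of_nonneg_right (by linarith) hSQnn
  have h6 := mul_le_mul_of_nonneg_left h5 (sq_nonneg (((k - 2 * b : ℕ) : ℝ)))
  calc X ^ 2 * ((k - q₁ - b : ℕ) : ℝ) ^ 2 = ((k - q₁ - b : ℕ) : ℝ) ^ 2 * X ^ 2 := by ring
    _ ≤ ((k - 2 * b : ℕ) : ℝ) ^ 2 * (2 * b * SQ) := hkey
    _ ≤ ((k - 2 * b : ℕ) : ℝ) ^ 2 * (2 * (((k - q₁ : ℕ) : ℝ) + b) * SQ) := h6
    _ = 2 * (((k - q₁ : ℕ) : ℝ) + b) * SQ * ((k - 2 * b : ℕ) : ℝ) ^ 2 := by ring
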